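/- Let λ ∈ ℓ¹(ℤ) satisfy λ_k ≥ c ω^{−|k|} for some c > 0, ω > 1 and all k ∈ ℤ. Then e_n(H_λ)² ≥ (c/2) · min{ 1, ω^{−4n}/(4n(1−ω^{−1})) }. -/

import Mathlib

/-- The reproducing kernel `K_λ(x,y) = ∑_k λ_k e^{2πik(x-y)}` of the univariate space `H_λ`. -/
noncomputable def Klam1 (lam : ℤ → ℝ) (x y : ℝ) : ℂ :=
  ∑' k : ℤ, (lam k : ℂ) * Complex.exp (2 * Real.pi * Complex.I * (((k : ℝ) * (x - y) : ℝ) : ℂ))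

/-- Squared worst-case error of the quadrature rule with nodes `x` and weights `a` for
`∫₀¹ f dx` on `H_λ`:
`e(Q)² = λ₀ - 2 λ₀ Re(∑ aₖ) + ∑_{j,k} conj(a_j) a_k K_λ(x_j, x_k)`. -/
noncomputable def quadErr2₁ (lam : ℤ → ℝ) {n : ℕ} (x : Fin n → ℝ) (a : Fin n → ℂ) : ℝ :=
  lam 0 - 2 * lam 0 * (∑ j, a j).re +
    (∑ j, ∑ k, (starRingEnd ℂ) (a j) * a k * Klam1 lam (x j) (x k)).re

/-- `e_n(H_λ)²`: squared minimal worst-case error among quadrature rules with `n` nodes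
for `∫₀¹ f dx` on the univariate space `H_λ`. -/
noncomputable def en2₁ (lam : ℤ → ℝ) (n : ℕ) : ℝ :=
  ⨅ (x : Fin n → ℝ) (a : Fin n → ℂ), quadErr2₁ lam x a


open Complex Finset
open scoped Real BigOperators

noncomputable section AuxBlaschke

/-- coefficients of the Blaschke factor `(ζ - v)/(1 - conj v · ζ)` -/
def bcf (v : ℂ) : ℕ → ℂ := fun m =>
  if m = 0 then -v else (starRingEnd ℂ v) ^ (m - 1) * ((1 - ‖v‖ ^ 2 : ℝ) : ℂ)

/-- Cauchy convolution of sequences -/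
def convC (f g : ℕ → ℂ) : ℕ → ℂ := fun m => ∑ k ∈ Finset.range (m + 1), f k * g (m - k)

/-- coefficient sequence of the finite Blaschke product with zero list `l` -/
def UU : List ℂ → ℕ → ℂ
  | [] => fun m => if m = 0 then 1 else 0
  | v :: t => convC (bcf v) (UU t)

lemma bcf_norm_le {v : ℂ} {r : ℝ} (h0 : 0 < r) (h1 : r < 1) (hv : ‖v‖ ≤ r) (m : ℕ) :
    ‖bcf v m‖ ≤ r ^ m * r⁻¹ := by
  have hv1 : ‖v‖ < 1 := lt_of_le_of_lt hv h1
  rcases m with _ | m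
  · have : ‖bcf v 0‖ = ‖v‖ := by simp [bcf]
    rw [this, pow_zero, one_mul]
    have hri : r ≤ r⁻¹ := by
      rw [← one_div, le_div_iff₀ h0]; nlinarith
    linarith
  · simp only [bcf, Nat.succ_ne_zero, if_false, Nat.add_sub_cancel]
    rw [norm_mul, norm_pow, RCLike.norm_conj]
    have h2 : ‖((1 - ‖v‖ ^ 2 : ℝ) : ℂ)‖ ≤ 1 := by
      rw [Complex.norm_real, Real.norm_eq_abs, _root_.abs_of_nonneg (by nlinarith [norm_nonneg v, hv1, mul_nonneg (norm_nonneg v) (norm_nonneg v)])]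
      nlinarith [norm_nonneg v]
    have h3 : ‖v‖ ^ m ≤ r ^ m := pow_le_pow_left₀ (norm_nonneg v) hv m
    have : r ^ (m + 1) * r⁻¹ = r ^ m := by
      field_simp [pow_succ]
      ring
    rw [this]
    calc ‖v‖ ^ m * ‖((1 - ‖v‖ ^ 2 : ℝ) : ℂ)‖ ≤ r ^ m * 1 := by
          exact mul_le_mul h3 h2 (norm_nonneg _) (by positivity)
    _ = r ^ m := mul_one _

lemma UU_norm_le {r : ℝ} (h0 : 0 < r) (h1 : r < 1) :
    ∀ (l : List ℂ), (∀ v ∈ l, ‖v‖ ≤ r) → ∀ m,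
      ‖UU l m‖ ≤ ((m : ℝ) + 1) ^ l.length * r ^ m * (r⁻¹) ^ l.length := by
  intro l
  induction l with
  | nil =>
      intro _ m
      rcases m with _ | m
      · simp [UU]
      · simp only [UU, Nat.succ_ne_zero, if_false, norm_zero, List.length_nil, pow_zero,
          one_mul, mul_one]
        positivity
  | cons v t ih =>
      intro hl m
      have hv : ‖v‖ ≤ r := hl v List.mem_cons_self
      have ht : ∀ u ∈ t, ‖u‖ ≤ r := fun u hu => hl u (List.mem_cons_of_mem v hu)
      have key : ∀ k ∈ Finset.range (m + 1),
          ‖bcf v k * UU t (m - k)‖ ≤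
            ((m : ℝ) + 1) ^ t.length * r ^ m * (r⁻¹) ^ (t.length + 1) := by
        intro k hk
        have hk' : k ≤ m := Nat.lt_succ_iff.mp (Finset.mem_range.mp hk)
        rw [norm_mul]
        have b1 := bcf_norm_le h0 h1 hv k
        have b2 := ih ht (m - k)
        have hmono : ((m - k : ℕ) : ℝ) + 1 ≤ (m : ℝ) + 1 := by
          have : (m - k : ℕ) ≤ m := Nat.sub_le m k
          have := (Nat.cast_le (α := ℝ)).mpr this
          linarith
        have b2' : ‖UU t (m - k)‖ ≤ ((m : ℝ) + 1) ^ t.length * r ^ (m - k) * (r⁻¹) ^ t.length := by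
          refine le_trans b2 ?_
          have hXY : (((m - k : ℕ) : ℝ) + 1) ^ t.length ≤ ((m : ℝ) + 1) ^ t.length :=
            pow_le_pow_left₀ (by positivity) hmono t.length
          exact mul_le_mul_of_nonneg_right
            (mul_le_mul_of_nonneg_right hXY (by positivity)) (by positivity)
        calc ‖bcf v k‖ * ‖UU t (m - k)‖
            ≤ (r ^ k * r⁻¹) * (((m : ℝ) + 1) ^ t.length * r ^ (m - k) * (r⁻¹) ^ t.length) := by
              exact mul_le_mul b1 b2' (norm_nonneg _) (by positivity)
        _ = ((m : ℝ) + 1) ^ t.length * (r ^ k * r ^ (m - k)) * (r⁻¹) ^ (t.length + 1) := by ring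
        _ = ((m : ℝ) + 1) ^ t.length * r ^ m * (r⁻¹) ^ (t.length + 1) := by
              rw [← pow_add, Nat.add_sub_cancel' hk']
      have := norm_sum_le (Finset.range (m + 1)) (fun k => bcf v k * UU t (m - k))
      have hsum : ‖UU (v :: t) m‖ ≤ ∑ k ∈ Finset.range (m + 1), ‖bcf v k * UU t (m - k)‖ := this
      refine le_trans hsum ?_
      refine le_trans (Finset.sum_le_sum key) ?_
      rw [Finset.sum_const, Finset.card_range, nsmul_eq_mul]
      simp only [List.length_cons]
      have : ((m : ℝ) + 1) ^ (t.length + 1) = ((m:ℝ)+1) * ((m:ℝ)+1)^t.length := by ring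
      rw [this]
      push_cast
      ring_nf
      exact le_refl _

lemma summable_geo_aux (L : ℕ) {y : ℝ} (h0 : 0 < y) (h1 : y < 1) :
    Summable (fun m : ℕ => ((m : ℝ) + 1) ^ L * y ^ m) := by
  have h := summable_pow_mul_geometric_of_norm_lt_one (R := ℝ) L (r := y)
    (by rwa [Real.norm_eq_abs, _root_.abs_of_nonneg h0.le])
  have h2 : Summable (fun m : ℕ => ((m + 1 : ℕ) : ℝ) ^ L * y ^ (m + 1)) :=
    (summable_nat_add_iff 1).mpr h
  have h3 := h2.mul_right y⁻¹
  refine h3.congr fun m => ?_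
  push_cast
  field_simp
  ring

end AuxBlaschke
section Part2
open Complex Finset
open scoped Real BigOperators

lemma UU_summable_norm_mul {r : ℝ} (h0 : 0 < r) (h1 : r < 1) (l : List ℂ)
    (hl : ∀ v ∈ l, ‖v‖ ≤ r) {z : ℂ} (hz : ‖z‖ ≤ r) :
    Summable (fun m : ℕ => ‖UU l m * z ^ m‖) := by
  have hy0 : (0:ℝ) < r ^ 2 := by positivity
  have hy1 : r ^ 2 < 1 := by nlinarith
  refine Summable.of_nonneg_of_le (fun m => norm_nonneg _) (fun m => ?_)
    ((summable_geo_aux l.length hy0 hy1).mul_left ((r⁻¹) ^ l.length))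
  rw [norm_mul, norm_pow]
  calc ‖UU l m‖ * ‖z‖ ^ m ≤ (((m:ℝ)+1) ^ l.length * r ^ m * (r⁻¹) ^ l.length) * r ^ m := by
        exact mul_le_mul (UU_norm_le h0 h1 l hl m) (pow_le_pow_left₀ (norm_nonneg z) hz m)
          (by positivity) (by positivity)
  _ = (r⁻¹) ^ l.length * (((m:ℝ)+1) ^ l.length * (r ^ 2) ^ m) := by
        have hr2 : ((r ^ 2) ^ m : ℝ) = r ^ m * r ^ m := by
          rw [← pow_mul, mul_comm 2 m, pow_mul]; ring
        rw [hr2]; ring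

lemma UU_summable_mul {r : ℝ} (h0 : 0 < r) (h1 : r < 1) (l : List ℂ)
    (hl : ∀ v ∈ l, ‖v‖ ≤ r) {z : ℂ} (hz : ‖z‖ ≤ r) :
    Summable (fun m : ℕ => UU l m * z ^ m) :=
  (UU_summable_norm_mul h0 h1 l hl hz).of_norm

lemma UU_summable_sq {r : ℝ} (h0 : 0 < r) (h1 : r < 1) (l : List ℂ)
    (hl : ∀ v ∈ l, ‖v‖ ≤ r) :
    Summable (fun m : ℕ => ‖UU l m‖ ^ 2) := by
  have hy0 : (0:ℝ) < r ^ 2 := by positivity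
  have hy1 : r ^ 2 < 1 := by nlinarith
  refine Summable.of_nonneg_of_le (fun m => by positivity) (fun m => ?_)
    ((summable_geo_aux (2 * l.length) hy0 hy1).mul_left (((r⁻¹) ^ l.length) ^ 2))
  have h := UU_norm_le h0 h1 l hl m
  have h2 : ‖UU l m‖ ^ 2 ≤ (((m:ℝ)+1) ^ l.length * r ^ m * (r⁻¹) ^ l.length) ^ 2 := by
    exact pow_le_pow_left₀ (norm_nonneg _) h 2
  refine le_trans h2 (le_of_eq ?_)
  have hr2 : ((r ^ 2) ^ m : ℝ) = r ^ m * r ^ m := by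
    rw [← pow_mul, mul_comm 2 m, pow_mul]; ring
  have hL : (((m:ℝ)+1)) ^ (2 * l.length) = ((((m:ℝ)+1)) ^ l.length) ^ 2 := by
    rw [← pow_mul, mul_comm 2 l.length, pow_mul]
  rw [hr2, hL]; ring

lemma bcf_summable_norm_mul {v : ℂ} (hv : ‖v‖ < 1) {z : ℂ} (hz : ‖z‖ < 1) :
    Summable (fun m : ℕ => ‖bcf v m * z ^ m‖) := by
  refine Summable.of_nonneg_of_le (fun m => norm_nonneg _) (fun m => ?_)
    (((summable_geometric_of_lt_one (norm_nonneg z) hz)).mul_left 1)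
  rw [norm_mul, norm_pow]
  have hb : ‖bcf v m‖ ≤ 1 := by
    rcases m with _ | m
    · simpa [bcf] using hv.le
    · simp only [bcf, Nat.succ_ne_zero, if_false, Nat.add_sub_cancel]
      rw [norm_mul, norm_pow, RCLike.norm_conj, Complex.norm_real, Real.norm_eq_abs,
        _root_.abs_of_nonneg (by nlinarith [norm_nonneg v])]
      have : ‖v‖ ^ m ≤ 1 := pow_le_one₀ (norm_nonneg v) hv.le
      nlinarith [pow_nonneg (norm_nonneg v) m, norm_nonneg v]
  calc ‖bcf v m‖ * ‖z‖ ^ m ≤ 1 * ‖z‖ ^ m :=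
        mul_le_mul_of_nonneg_right hb (by positivity)
  _ = 1 * ‖z‖ ^ m := rfl

lemma bcf_tsum_root {v : ℂ} (hv : ‖v‖ < 1) : ∑' m : ℕ, bcf v m * v ^ m = 0 := by
  have hvv : ‖(starRingEnd ℂ v) * v‖ < 1 := by
    rw [norm_mul, RCLike.norm_conj]
    nlinarith [norm_nonneg v]
  have htail : Summable (fun m : ℕ => bcf v (m + 1) * v ^ (m + 1)) := by
    have : Summable (fun m : ℕ => (((1 - ‖v‖ ^ 2 : ℝ) : ℂ) * v) * ((starRingEnd ℂ v) * v) ^ m) :=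
      (summable_geometric_of_norm_lt_one hvv).mul_left _
    refine this.congr fun m => ?_
    simp only [bcf, Nat.succ_ne_zero, if_false, Nat.add_sub_cancel]
    rw [mul_pow, pow_succ]
    ring
  have hsum : Summable (fun m : ℕ => bcf v m * v ^ m) := (summable_nat_add_iff 1).mp htail
  rw [Summable.tsum_eq_zero_add hsum]
  have h1 : ∑' m : ℕ, bcf v (m + 1) * v ^ (m + 1)
      = (((1 - ‖v‖ ^ 2 : ℝ) : ℂ) * v) * (1 - (starRingEnd ℂ v) * v)⁻¹ := by
    have : ∀ m : ℕ, bcf v (m + 1) * v ^ (m + 1)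
        = (((1 - ‖v‖ ^ 2 : ℝ) : ℂ) * v) * ((starRingEnd ℂ v) * v) ^ m := by
      intro m
      simp only [bcf, Nat.succ_ne_zero, if_false, Nat.add_sub_cancel]
      rw [mul_pow, pow_succ]
      ring
    rw [tsum_congr this, tsum_mul_left, tsum_geometric_of_norm_lt_one hvv]
  rw [h1]
  have hcv : (starRingEnd ℂ v) * v = ((‖v‖ ^ 2 : ℝ) : ℂ) := by
    rw [mul_comm, Complex.mul_conj]
    exact congrArg _ (by rw [Complex.normSq_eq_norm_sq])
  rw [hcv]
  have hne : (1 : ℂ) - ((‖v‖ ^ 2 : ℝ) : ℂ) ≠ 0 := by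
    rw [sub_ne_zero]
    intro h
    have h2 := congrArg Complex.re h
    simp only [Complex.one_re, Complex.ofReal_re] at h2
    nlinarith [norm_nonneg v]
  have hcast : ((1 - ‖v‖ ^ 2 : ℝ) : ℂ) = 1 - ((‖v‖ ^ 2 : ℝ) : ℂ) := by
    rw [Complex.ofReal_sub, Complex.ofReal_one]
  rw [hcast]
  have hsimp : (1 - ((‖v‖ ^ 2 : ℝ) : ℂ)) * v * (1 - ((‖v‖ ^ 2 : ℝ) : ℂ))⁻¹ = v := by
    rw [mul_comm ((1:ℂ) - _) v, mul_assoc, mul_inv_cancel₀ hne, mul_one]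
  rw [hsimp]
  simp [bcf]
end Part2
section Part3
open Complex Finset
open scoped Real BigOperators

lemma UU_tsum_root {r : ℝ} (h0 : 0 < r) (h1 : r < 1) :
    ∀ (l : List ℂ), (∀ v ∈ l, ‖v‖ ≤ r) → ∀ z ∈ l, ∑' m : ℕ, UU l m * z ^ m = 0 := by
  intro l
  induction l with
  | nil => intro _ z hz; exact absurd hz List.not_mem_nil
  | cons v t ih =>
      intro hl z hz
      have hv : ‖v‖ ≤ r := hl v List.mem_cons_self
      have ht : ∀ u ∈ t, ‖u‖ ≤ r := fun u hu => hl u (List.mem_cons_of_mem v hu)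
      have hzr : ‖z‖ ≤ r := hl z hz
      have hbn : Summable (fun m : ℕ => ‖bcf v m * z ^ m‖) :=
        bcf_summable_norm_mul (lt_of_le_of_lt hv h1) (lt_of_le_of_lt hzr h1)
      have hun : Summable (fun m : ℕ => ‖UU t m * z ^ m‖) :=
        UU_summable_norm_mul h0 h1 t ht hzr
      have key : ∑' m : ℕ, UU (v :: t) m * z ^ m
          = (∑' m : ℕ, bcf v m * z ^ m) * (∑' m : ℕ, UU t m * z ^ m) := by
        rw [tsum_mul_tsum_eq_tsum_sum_range_of_summable_norm hbn hun]
        refine tsum_congr fun m => ?_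
        show (∑ k ∈ Finset.range (m+1), bcf v k * UU t (m - k)) * z ^ m = _
        rw [Finset.sum_mul]
        refine Finset.sum_congr rfl fun k hk => ?_
        have hk' : k ≤ m := Nat.lt_succ_iff.mp (Finset.mem_range.mp hk)
        have : z ^ m = z ^ k * z ^ (m - k) := by
          rw [← pow_add, Nat.add_sub_cancel' hk']
        rw [this]; ring
      rw [key]
      rcases List.mem_cons.mp hz with h | h
      · rw [h, bcf_tsum_root (lt_of_le_of_lt hv h1), zero_mul]
      · rw [ih ht z h, mul_zero]

/-- partial geometric-weighted sums used in the isometry argument -/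
noncomputable def Gs (v : ℂ) (u : ℕ → ℂ) : ℕ → ℂ := fun m =>
  ∑ i ∈ Finset.range (m + 1), (starRingEnd ℂ v) ^ (m - i) * u i

lemma Gs_zero (v : ℂ) (u : ℕ → ℂ) : Gs v u 0 = u 0 := by simp [Gs]

lemma Gs_succ (v : ℂ) (u : ℕ → ℂ) (m : ℕ) :
    Gs v u (m + 1) = starRingEnd ℂ v * Gs v u m + u (m + 1) := by
  unfold Gs
  rw [Finset.sum_range_succ, Nat.sub_self, pow_zero, one_mul, Finset.mul_sum]
  congr 1
  refine Finset.sum_congr rfl fun i hi => ?_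
  have hi' : i ≤ m := Nat.lt_succ_iff.mp (Finset.mem_range.mp hi)
  rw [← mul_assoc, ← pow_succ']
  congr 2
  omega

lemma convC_zero (f g : ℕ → ℂ) : convC f g 0 = f 0 * g 0 := by simp [convC]

lemma conv_bcf_succ (v : ℂ) (u : ℕ → ℂ) (m : ℕ) :
    convC (bcf v) u (m + 1) = -v * u (m + 1) + ((1 - ‖v‖ ^ 2 : ℝ) : ℂ) * Gs v u m := by
  unfold convC
  rw [Finset.sum_range_succ']
  have h0 : bcf v 0 * u (m + 1 - 0) = -v * u (m + 1) := by simp [bcf]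
  have hsum : ∑ k ∈ Finset.range (m + 1), bcf v (k + 1) * u (m + 1 - (k + 1))
      = ((1 - ‖v‖ ^ 2 : ℝ) : ℂ) * Gs v u m := by
    unfold Gs
    rw [Finset.mul_sum, ← Finset.sum_range_reflect]
    refine Finset.sum_congr rfl fun k hk => ?_
    have hk' : k ≤ m := Nat.lt_succ_iff.mp (Finset.mem_range.mp hk)
    simp only [bcf, Nat.succ_ne_zero, if_false, Nat.add_sub_cancel]
    have h3 : m + 1 - (m - k + 1) = k := by omega
    rw [h3]
    ring
  rw [h0, hsum, add_comm]

lemma energy_id (v A G : ℂ) :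
    ‖-v * A + ((1 - ‖v‖ ^ 2 : ℝ) : ℂ) * G‖ ^ 2
      + (1 - ‖v‖ ^ 2) * ‖starRingEnd ℂ v * G + A‖ ^ 2
    = ‖A‖ ^ 2 + (1 - ‖v‖ ^ 2) * ‖G‖ ^ 2 := by
  have hnorm : ∀ z : ℂ, ‖z‖ ^ 2 = Complex.normSq z := fun z => by
    rw [Complex.sq_norm]
  simp only [hnorm]
  have hv : (Complex.normSq v : ℝ) = ‖v‖ ^ 2 := by
    rw [Complex.normSq_eq_norm_sq]
  simp only [Complex.normSq_apply, Complex.add_re, Complex.add_im, Complex.mul_re, Complex.mul_im,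
    Complex.neg_re, Complex.neg_im, Complex.ofReal_re, Complex.ofReal_im,
    Complex.conj_re, Complex.conj_im]
  ring

lemma partial_energy (v : ℂ) (u : ℕ → ℂ) (M : ℕ) :
    ∑ m ∈ Finset.range (M + 1), ‖convC (bcf v) u m‖ ^ 2
        + (1 - ‖v‖ ^ 2) * ‖Gs v u M‖ ^ 2
      = ∑ m ∈ Finset.range (M + 1), ‖u m‖ ^ 2 := by
  induction M with
  | zero =>
      have hb : convC (bcf v) u 0 = -v * u 0 := by rw [convC_zero]; simp [bcf]
      simp only [zero_add, Finset.sum_range_one, Gs_zero, hb]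
      rw [norm_mul, norm_neg, mul_pow]
      ring
  | succ M ihM =>
      rw [Finset.sum_range_succ (fun m => ‖convC (bcf v) u m‖ ^ 2),
        Finset.sum_range_succ (fun m => ‖u m‖ ^ 2), ← ihM]
      rw [conv_bcf_succ, Gs_succ]
      have h := energy_id v (u (M + 1)) (Gs v u M)
      linarith [h]

lemma UU_sq_le_one {r : ℝ} (h0 : 0 < r) (h1 : r < 1) :
    ∀ (l : List ℂ), (∀ v ∈ l, ‖v‖ ≤ r) → ∑' m : ℕ, ‖UU l m‖ ^ 2 ≤ 1 := by
  intro l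
  induction l with
  | nil =>
      intro _
      have : (fun m : ℕ => ‖UU [] m‖ ^ 2) = fun m => if m = 0 then (1:ℝ) else 0 := by
        funext m
        rcases m with _ | m <;> simp [UU]
      rw [this]
      rw [tsum_eq_single 0 (fun m hm => by simp [hm])]
      simp
  | cons v t ih =>
      intro hl
      have hv : ‖v‖ ≤ r := hl v List.mem_cons_self
      have ht : ∀ u ∈ t, ‖u‖ ≤ r := fun u hu => hl u (List.mem_cons_of_mem v hu)
      have hβ : 0 ≤ 1 - ‖v‖ ^ 2 := by nlinarith [norm_nonneg v, lt_of_le_of_lt hv h1]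
      refine Real.tsum_le_of_sum_range_le (fun m => by positivity) fun M => ?_
      rcases M with _ | M
      · simp
      · have hpe := partial_energy v (UU t) M
        have h1' : ∑ m ∈ Finset.range (M + 1), ‖UU (v :: t) m‖ ^ 2
            ≤ ∑ m ∈ Finset.range (M + 1), ‖UU t m‖ ^ 2 := by
          have : (0:ℝ) ≤ (1 - ‖v‖ ^ 2) * ‖Gs v (UU t) M‖ ^ 2 := by positivity
          show ∑ m ∈ Finset.range (M + 1), ‖convC (bcf v) (UU t) m‖ ^ 2 ≤ _
          linarith
        refine le_trans h1' (le_trans ?_ (ih ht))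
        exact Summable.sum_le_tsum _ (fun m _ => by positivity) (UU_summable_sq h0 h1 t ht)

lemma UU_zero_norm : ∀ (l : List ℂ), ‖UU l 0‖ = (l.map (fun v => ‖v‖)).prod := by
  intro l
  induction l with
  | nil => simp [UU]
  | cons v t ih =>
      show ‖convC (bcf v) (UU t) 0‖ = _
      rw [convC_zero]
      have : bcf v 0 = -v := by simp [bcf]
      rw [this, norm_mul, norm_neg, List.map_cons, List.prod_cons, ih]

lemma tsum_cs (f g : ℕ → ℝ) (hf0 : ∀ m, 0 ≤ f m) (hg0 : ∀ m, 0 ≤ g m)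
    (hf : Summable (fun m => f m ^ 2)) (hg : Summable (fun m => g m ^ 2)) :
    (∑' m, f m * g m) ^ 2 ≤ (∑' m, f m ^ 2) * (∑' m, g m ^ 2) := by
  set A := ∑' m, f m ^ 2 with hA
  set B := ∑' m, g m ^ 2 with hB
  have hA0 : 0 ≤ A := tsum_nonneg (fun m => by positivity)
  have hB0 : 0 ≤ B := tsum_nonneg (fun m => by positivity)
  have hAB : 0 ≤ A * B := mul_nonneg hA0 hB0
  have hpart : ∀ M : ℕ, ∑ m ∈ Finset.range M, f m * g m ≤ Real.sqrt (A * B) := by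
    intro M
    have hcs := Finset.sum_mul_sq_le_sq_mul_sq (Finset.range M) f g
    have h1 : ∑ m ∈ Finset.range M, f m ^ 2 ≤ A :=
      Summable.sum_le_tsum _ (fun m _ => by positivity) hf
    have h2 : ∑ m ∈ Finset.range M, g m ^ 2 ≤ B :=
      Summable.sum_le_tsum _ (fun m _ => by positivity) hg
    have h3 : (∑ m ∈ Finset.range M, f m * g m) ^ 2 ≤ A * B := by
      refine le_trans hcs ?_
      exact mul_le_mul h1 h2 (Finset.sum_nonneg fun m _ => by positivity) hA0
    have h4 : 0 ≤ ∑ m ∈ Finset.range M, f m * g m :=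
      Finset.sum_nonneg fun m _ => mul_nonneg (hf0 m) (hg0 m)
    nlinarith [Real.sq_sqrt hAB, Real.sqrt_nonneg (A * B)]
  have htsum : ∑' m, f m * g m ≤ Real.sqrt (A * B) :=
    Real.tsum_le_of_sum_range_le (fun m => mul_nonneg (hf0 m) (hg0 m)) hpart
  have h0 : 0 ≤ ∑' m, f m * g m := tsum_nonneg fun m => mul_nonneg (hf0 m) (hg0 m)
  nlinarith [Real.sq_sqrt hAB, Real.sqrt_nonneg (A * B)]

end Part3
section Part4
open Complex Finset
open scoped Real BigOperators

theorem star_bound {N : ℕ} (w bb : Fin N → ℂ) (r : ℝ) (h0 : 0 < r) (h1 : r < 1)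
    (hw : ∀ j, ‖w j‖ ≤ r) :
    (∏ j, ‖w j‖ ^ 2) ≤ ∑' m : ℕ, ‖(if m = 0 then (1:ℂ) else 0) - ∑ j, bb j * w j ^ m‖ ^ 2 := by
  classical
  set l : List ℂ := List.ofFn (fun j => starRingEnd ℂ (w j)) with hl
  have hml : ∀ v ∈ l, ‖v‖ ≤ r := by
    intro v hv
    rw [hl, List.mem_ofFn] at hv
    obtain ⟨j, rfl⟩ := hv
    rw [RCLike.norm_conj]; exact hw j
  set u : ℕ → ℂ := UU l with hu
  set s : ℕ → ℂ := fun m => (if m = 0 then (1:ℂ) else 0) - ∑ j, bb j * w j ^ m with hsdef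
  set Bb : ℝ := ∑ j, ‖bb j‖ with hBb
  have hBb0 : 0 ≤ Bb := Finset.sum_nonneg fun j _ => norm_nonneg _
  have hwm : ∀ (j : Fin N) (m : ℕ), ‖w j ^ m‖ ≤ r ^ m := fun j m => by
    rw [norm_pow]; exact pow_le_pow_left₀ (norm_nonneg _) (hw j) m
  have hsum_norm : ∀ m, ‖∑ j, bb j * w j ^ m‖ ≤ Bb * r ^ m := by
    intro m
    refine le_trans (norm_sum_le _ _) ?_
    rw [hBb, Finset.sum_mul]
    refine Finset.sum_le_sum fun j _ => ?_
    rw [norm_mul]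
    exact mul_le_mul_of_nonneg_left (hwm j m) (norm_nonneg _)
  have hsgeo : ∀ m, ‖s m‖ ≤ (1 + Bb) * r ^ m := by
    intro m
    rcases m with _ | m
    · have hs0 : s 0 = 1 - ∑ j, bb j * w j ^ 0 := by simp [hsdef]
      rw [hs0, pow_zero, mul_one]
      refine le_trans (norm_sub_le _ _) ?_
      have := hsum_norm 0
      rw [pow_zero, mul_one] at this
      simp only [norm_one]
      linarith
    · have hsm : s (m + 1) = -∑ j, bb j * w j ^ (m + 1) := by simp [hsdef]
      rw [hsm, norm_neg]
      refine le_trans (hsum_norm (m + 1)) ?_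
      have : (0:ℝ) ≤ r ^ (m + 1) := by positivity
      nlinarith
  have hs2 : Summable (fun m => ‖s m‖ ^ 2) := by
    have hy0 : (0:ℝ) < r ^ 2 := by positivity
    have hy1 : r ^ 2 < 1 := by nlinarith
    refine Summable.of_nonneg_of_le (fun m => by positivity) (fun m => ?_)
      (((summable_geometric_of_lt_one hy0.le hy1)).mul_left ((1 + Bb) ^ 2))
    have h := hsgeo m
    have h2 : ‖s m‖ ^ 2 ≤ ((1 + Bb) * r ^ m) ^ 2 := pow_le_pow_left₀ (norm_nonneg _) h 2
    refine le_trans h2 (le_of_eq ?_)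
    have : ((r ^ 2) ^ m : ℝ) = (r ^ m) ^ 2 := by
      rw [← pow_mul, mul_comm 2 m, pow_mul]
    rw [this]; ring
  have hLen : l.length = N := by rw [hl, List.length_ofFn]
  have hu_norm_sum : Summable (fun m => ‖u m‖) := by
    refine Summable.of_nonneg_of_le (fun m => norm_nonneg _) (fun m => ?_)
      ((summable_geo_aux l.length h0 h1).mul_left ((r⁻¹) ^ l.length))
    have := UU_norm_le h0 h1 l hml m
    rw [hu]
    refine le_trans this (le_of_eq (by ring))
  have hUsq : Summable (fun m => ‖u m‖ ^ 2) := UU_summable_sq h0 h1 l hml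
  have hprod_sum : Summable (fun m => ‖(starRingEnd ℂ) (u m) * s m‖) := by
    refine Summable.of_nonneg_of_le (fun m => norm_nonneg _) (fun m => ?_)
      (hu_norm_sum.mul_left (1 + Bb))
    rw [norm_mul, RCLike.norm_conj]
    have h2 : ‖s m‖ ≤ 1 + Bb := by
      have := hsgeo m
      have h3 : r ^ m ≤ 1 := pow_le_one₀ h0.le h1.le
      nlinarith [norm_nonneg (u m), norm_nonneg (s m)]
    calc ‖u m‖ * ‖s m‖ ≤ ‖u m‖ * (1 + Bb) :=
          mul_le_mul_of_nonneg_left h2 (norm_nonneg _)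
    _ = (1 + Bb) * ‖u m‖ := by ring
  have hzero' : ∀ j : Fin N, ∑' m, (starRingEnd ℂ) (u m) * (w j) ^ m = 0 := by
    intro j
    have hmem : starRingEnd ℂ (w j) ∈ l := by rw [hl, List.mem_ofFn]; exact ⟨j, rfl⟩
    have hz := UU_tsum_root h0 h1 l hml _ hmem
    have heq : (fun m => (starRingEnd ℂ) (u m) * (w j) ^ m)
        = fun m => star (u m * (starRingEnd ℂ (w j)) ^ m) := by
      funext m
      rw [star_mul', star_pow]
      rw [starRingEnd_apply, starRingEnd_apply, star_star]
    rw [heq, ← tsum_star, hu, hz, star_zero]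
  have hfirst_summ : Summable (fun m => (starRingEnd ℂ) (u m) * (if m = 0 then (1:ℂ) else 0)) := by
    refine summable_of_ne_finset_zero (s := {0}) fun m hm => ?_
    have : m ≠ 0 := by simpa using hm
    simp [this]
  have hsecond_summ_j : ∀ j : Fin N,
      Summable (fun m => (starRingEnd ℂ) (u m) * (bb j * w j ^ m)) := by
    intro j
    refine Summable.of_norm_bounded (hu_norm_sum.mul_left ‖bb j‖) (fun m => ?_)
    rw [norm_mul, RCLike.norm_conj, norm_mul]
    have h2 : ‖w j ^ m‖ ≤ 1 := by
      refine le_trans (hwm j m) (pow_le_one₀ h0.le h1.le)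
    calc ‖u m‖ * (‖bb j‖ * ‖w j ^ m‖) ≤ ‖u m‖ * (‖bb j‖ * 1) := by
          refine mul_le_mul_of_nonneg_left ?_ (norm_nonneg _)
          exact mul_le_mul_of_nonneg_left h2 (norm_nonneg _)
    _ = ‖bb j‖ * ‖u m‖ := by ring
  have hsecond_summ : Summable (fun m => (starRingEnd ℂ) (u m) * ∑ j, bb j * w j ^ m) := by
    have : (fun m => (starRingEnd ℂ) (u m) * ∑ j, bb j * w j ^ m)
        = fun m => ∑ j, (starRingEnd ℂ) (u m) * (bb j * w j ^ m) := by
      funext m; rw [Finset.mul_sum]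
    rw [this]
    exact summable_sum fun j _ => hsecond_summ_j j
  have hpairing : ∑' m, (starRingEnd ℂ) (u m) * s m = (starRingEnd ℂ) (u 0) := by
    have hsplit : (fun m => (starRingEnd ℂ) (u m) * s m)
        = fun m => ((starRingEnd ℂ) (u m) * (if m = 0 then (1:ℂ) else 0))
            - (starRingEnd ℂ) (u m) * (∑ j, bb j * w j ^ m) := by
      funext m; rw [hsdef]; ring
    rw [hsplit, Summable.tsum_sub hfirst_summ hsecond_summ]
    have hfirst : ∑' m, (starRingEnd ℂ) (u m) * (if m = 0 then (1:ℂ) else 0)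
        = (starRingEnd ℂ) (u 0) := by
      rw [tsum_eq_single 0 (fun m hm => by simp [hm])]
      simp
    have hsecond : ∑' m, (starRingEnd ℂ) (u m) * (∑ j, bb j * w j ^ m) = 0 := by
      have hswap : (fun m => (starRingEnd ℂ) (u m) * (∑ j, bb j * w j ^ m))
          = fun m => ∑ j, bb j * ((starRingEnd ℂ) (u m) * w j ^ m) := by
        funext m; rw [Finset.mul_sum]; refine Finset.sum_congr rfl fun j _ => by ring
      rw [hswap, Summable.tsum_finsetSum (fun j _ => ?_)]
      · refine Finset.sum_eq_zero fun j _ => ?_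
        rw [tsum_mul_left, hzero' j, mul_zero]
      · have := (hsecond_summ_j j)
        refine this.congr fun m => by ring
    rw [hfirst, hsecond, sub_zero]
  have hnormP : ‖(starRingEnd ℂ) (u 0)‖ ≤ ∑' m, ‖u m‖ * ‖s m‖ := by
    rw [← hpairing]
    refine le_trans (norm_tsum_le_tsum_norm hprod_sum) (le_of_eq (tsum_congr fun m => ?_))
    rw [norm_mul, RCLike.norm_conj]
  have hcs := tsum_cs (fun m => ‖u m‖) (fun m => ‖s m‖) (fun m => norm_nonneg _)
    (fun m => norm_nonneg _) hUsq hs2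
  have h1le : ∑' m, ‖u m‖ ^ 2 ≤ 1 := UU_sq_le_one h0 h1 l hml
  have hs2nonneg : (0:ℝ) ≤ ∑' m, ‖s m‖ ^ 2 := tsum_nonneg fun m => by positivity
  have hP2 : ‖(starRingEnd ℂ) (u 0)‖ ^ 2 ≤ ∑' m, ‖s m‖ ^ 2 := by
    have h2 := pow_le_pow_left₀ (norm_nonneg _) hnormP 2
    have h4 : (∑' m, ‖u m‖ ^ 2) * (∑' m, ‖s m‖ ^ 2) ≤ 1 * (∑' m, ‖s m‖ ^ 2) :=
      mul_le_mul_of_nonneg_right h1le hs2nonneg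
    rw [one_mul] at h4
    calc ‖(starRingEnd ℂ) (u 0)‖ ^ 2 ≤ (∑' m, ‖u m‖ * ‖s m‖) ^ 2 := h2
    _ ≤ (∑' m, ‖u m‖ ^ 2) * (∑' m, ‖s m‖ ^ 2) := hcs
    _ ≤ ∑' m, ‖s m‖ ^ 2 := h4
  have hu0 : ‖u 0‖ = ∏ j, ‖w j‖ := by
    rw [hu, UU_zero_norm, hl, List.map_ofFn, List.prod_ofFn]
    refine Finset.prod_congr rfl fun j _ => ?_
    simp [Function.comp, RCLike.norm_conj]
  calc ∏ j, ‖w j‖ ^ 2 = (∏ j, ‖w j‖) ^ 2 := by rw [← Finset.prod_pow]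
  _ = ‖(starRingEnd ℂ) (u 0)‖ ^ 2 := by rw [RCLike.norm_conj, hu0]
  _ ≤ ∑' m, ‖s m‖ ^ 2 := hP2

end Part4
section Part5
open Complex Finset
open scoped Real BigOperators

lemma arith_bound (μ : ℝ) (h0 : 0 < μ) (h1 : μ < 1) (n : ℕ) (hn : 1 ≤ n) :
    1 / 2 * min 1 (μ ^ (4 * n) / (4 * n * (1 - μ))) ≤ μ ^ n := by
  have hn1 : (1:ℝ) ≤ (n:ℝ) := by exact_mod_cast hn
  have hμn : 0 < μ ^ n := by positivity
  by_cases hc : (1:ℝ) / 2 ≤ μ ^ n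
  · have hle : min 1 (μ ^ (4*n) / (4*n*(1-μ))) ≤ 1 := min_le_left _ _
    have hge : 0 ≤ min 1 (μ ^ (4*n) / (4*n*(1-μ))) := by
      refine le_min (by norm_num) ?_
      have hden : 0 ≤ 4*(n:ℝ)*(1-μ) := by nlinarith
      positivity
    nlinarith
  · push_neg at hc
    have hmin : min 1 (μ ^ (4*n) / (4*n*(1-μ))) ≤ μ ^ (4*n) / (4*n*(1-μ)) := min_le_right _ _
    have hden : (0:ℝ) < 4*(n:ℝ)*(1-μ) := by nlinarith
    have hkey : μ ^ (3*n) ≤ 8*(n:ℝ)*(1-μ) := by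
      by_contra hK
      push_neg at hK
      have h3 : μ ^ (3*n) = (μ ^ n) ^ 3 := by rw [← pow_mul, mul_comm 3 n, pow_mul]
      have hlt : μ ^ (3*n) < 1/8 := by
        rw [h3]
        have hx2 : (μ^n)^2 < 1/4 := by nlinarith
        nlinarith
      have hδ : 1 - μ < 1/(64*(n:ℝ)) := by
        have h8 : 8*(n:ℝ)*(1-μ) < 1/8 := lt_trans hK hlt
        rw [lt_div_iff₀ (by nlinarith : (0:ℝ) < 64*(n:ℝ))]
        nlinarith
      have hb : 1 + (n:ℝ) * (-(1-μ)) ≤ μ ^ n := by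
        have := one_add_mul_le_pow (a := -(1-μ)) (by nlinarith) n
        have h2 : (1 + -(1-μ)) = μ := by ring
        rwa [h2] at this
      have hnδ : (n:ℝ) * (1-μ) < 1/64 := by
        have h2 : (n:ℝ) * (1-μ) < (n:ℝ) * (1/(64*(n:ℝ))) := by
          refine mul_lt_mul_of_pos_left hδ (by linarith)
        have h3 : (n:ℝ) * (1/(64*(n:ℝ))) = 1/64 := by
          field_simp
        linarith
      nlinarith
    have h4 : μ ^ (4*n) = μ ^ (3*n) * μ ^ n := by
      rw [← pow_add]; congr 1; ring
    have hfin : 1/2 * (μ ^ (4*n) / (4*(n:ℝ)*(1-μ))) ≤ μ ^ n := by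
      have hA : μ ^ (4*n) ≤ μ ^ n * (2 * (4*(n:ℝ)*(1-μ))) := by
        rw [h4]
        calc μ^(3*n) * μ^n ≤ (8*(n:ℝ)*(1-μ)) * μ^n := mul_le_mul_of_nonneg_right hkey hμn.le
        _ = μ^n * (2*(4*(n:ℝ)*(1-μ))) := by ring
      calc 1/2 * (μ^(4*n)/(4*(n:ℝ)*(1-μ))) = μ^(4*n) / (4*(n:ℝ)*(1-μ)) / 2 := by ring
      _ = μ^(4*n) / ((4*(n:ℝ)*(1-μ)) * 2) := by rw [div_div]
      _ ≤ μ^n := by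
        rw [div_le_iff₀ (by nlinarith : (0:ℝ) < (4*(n:ℝ)*(1-μ)) * 2)]
        nlinarith [hA]
    have hnn : (0:ℝ) ≤ 1/2 := by norm_num
    calc 1/2 * min 1 (μ ^ (4*n) / (4*n*(1-μ)))
        ≤ 1/2 * (μ ^ (4*n) / (4*n*(1-μ))) := mul_le_mul_of_nonneg_left hmin hnn
    _ ≤ μ ^ n := hfin

end Part5
set_option maxHeartbeats 1000000 in
/-- For `λ_k ≥ c ω^{-|k|}` with `c > 0`, `ω > 1`,
`e_n(H_λ)² ≥ (c/2) min{1, ω^{-4n}/(4n(1-ω⁻¹))}`. -/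
theorem en2_lower_bound_analytic (lam : ℤ → ℝ) (hlam : ∀ k, 0 ≤ lam k) (hs : Summable lam)
    (c ω : ℝ) (hc : 0 < c) (hω : 1 < ω)
    (hlow : ∀ k : ℤ, c * ω ^ (-(k.natAbs : ℤ)) ≤ lam k)
    (n : ℕ) (hn : 1 ≤ n) :
    c / 2 * min 1 (ω ^ (-(4 * n : ℤ)) / (4 * n * (1 - ω⁻¹))) ≤ en2₁ lam n := by
  classical
  have hω0 : 0 < ω := lt_trans one_pos hω
  set μ : ℝ := ω⁻¹ with hμ
  have hμ0 : 0 < μ := by positivity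
  have hμ1 : μ < 1 := by rw [hμ]; exact inv_lt_one_of_one_lt₀ hω
  -- arithmetic reduction
  have harith : c / 2 * min 1 (ω ^ (-(4 * n : ℤ)) / (4 * n * (1 - ω⁻¹))) ≤ c * μ ^ n := by
    have hzp : (ω : ℝ) ^ (-(4 * n : ℤ)) = μ ^ (4 * n) := by
      rw [show ((4 * n : ℤ)) = ((4 * n : ℕ) : ℤ) by push_cast; ring]
      rw [zpow_neg, zpow_natCast, ← inv_pow, hμ]
    rw [hzp, ← hμ]
    have hab := arith_bound μ hμ0 hμ1 n hn
    calc c / 2 * min 1 (μ ^ (4*n) / (4*(n:ℝ)*(1-μ)))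
        = c * (1/2 * min 1 (μ ^ (4*n) / (4*(n:ℝ)*(1-μ)))) := by ring
    _ ≤ c * μ ^ n := mul_le_mul_of_nonneg_left hab hc.le
  refine le_trans harith ?_
  rw [en2₁]
  refine le_ciInf fun x => le_ciInf fun a => ?_
  -- setup
  set η : Fin n → ℂ := fun j => Complex.exp (((-(2 * Real.pi * x j) : ℝ) : ℂ) * Complex.I)
    with hηdef
  have hηnorm : ∀ j, ‖η j‖ = 1 := fun j => by
    rw [hηdef, Complex.norm_exp_ofReal_mul_I]
  set T : ℤ → ℂ := fun m => ∑ j, a j * η j ^ m with hTdef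
  set B : ℝ := ∑ j, ‖a j‖ with hBdef
  have hB0 : 0 ≤ B := Finset.sum_nonneg fun j _ => norm_nonneg _
  have hTle : ∀ m : ℤ, ‖T m‖ ≤ B := by
    intro m
    rw [hTdef]
    refine le_trans (norm_sum_le _ _) (le_of_eq (Finset.sum_congr rfl fun j _ => ?_))
    rw [norm_mul, norm_zpow, hηnorm, one_zpow, mul_one]
  -- exponential bridge
  have key : ∀ (m : ℤ) (j k : Fin n),
      Complex.exp (2 * Real.pi * Complex.I * (((m : ℝ) * (x j - x k) : ℝ) : ℂ))
        = η j ^ (-m) * η k ^ m := by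
    intro m j k
    rw [hηdef]
    show Complex.exp _ = Complex.exp (((-(2 * Real.pi * x j) : ℝ) : ℂ) * Complex.I) ^ (-m)
        * Complex.exp (((-(2 * Real.pi * x k) : ℝ) : ℂ) * Complex.I) ^ m
    rw [← Complex.exp_int_mul, ← Complex.exp_int_mul, ← Complex.exp_add]
    congr 1
    push_cast
    ring
  -- per-frequency identity
  have hconjT : ∀ m : ℤ, (starRingEnd ℂ) (T m) = ∑ j, (starRingEnd ℂ) (a j) * η j ^ (-m) := by
    intro m
    rw [hTdef]
    rw [map_sum]
    refine Finset.sum_congr rfl fun j _ => ?_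
    rw [map_mul, map_zpow₀]
    congr 1
    have hc : (starRingEnd ℂ) (η j) = (η j)⁻¹ := by
      rw [hηdef]
      show (starRingEnd ℂ) (Complex.exp _) = _
      rw [← Complex.exp_conj, ← Complex.exp_neg]
      congr 1
      simp only [map_mul, Complex.conj_ofReal, Complex.conj_I]
      ring
    rw [hc, inv_zpow, ← zpow_neg]
  have hpm : ∀ m : ℤ, (lam m : ℂ) * ((starRingEnd ℂ) (T m) * T m)
      = ∑ j, ∑ k, (starRingEnd ℂ) (a j) * a k *
          ((lam m : ℂ) * Complex.exp (2 * Real.pi * Complex.I * (((m : ℝ) * (x j - x k) : ℝ) : ℂ))) := by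
    intro m
    rw [hconjT m, hTdef]
    rw [Finset.sum_mul_sum, Finset.mul_sum]
    refine Finset.sum_congr rfl fun j _ => ?_
    rw [Finset.mul_sum]
    refine Finset.sum_congr rfl fun k _ => ?_
    rw [key m j k]
    ring
  -- summability of the triple family
  have hexp1 : ∀ t : ℝ, ‖Complex.exp (2 * Real.pi * Complex.I * (t : ℂ))‖ = 1 := by
    intro t
    rw [show (2 * (Real.pi : ℂ) * Complex.I * (t : ℂ)) = ((2 * Real.pi * t : ℝ) : ℂ) * Complex.I
      by push_cast; ring]
    rw [Complex.norm_exp_ofReal_mul_I]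
  have hsummand : ∀ j k : Fin n, Summable (fun m : ℤ =>
      (starRingEnd ℂ) (a j) * a k *
        ((lam m : ℂ) * Complex.exp (2 * Real.pi * Complex.I * (((m : ℝ) * (x j - x k) : ℝ) : ℂ)))) := by
    intro j k
    refine Summable.of_norm_bounded (g := fun m => ‖a j‖ * ‖a k‖ * lam m)
      ((hs.mul_left (‖a j‖ * ‖a k‖)).congr fun m => by ring) (fun m => ?_)
    refine le_of_eq ?_
    rw [norm_mul, norm_mul, norm_mul, RCLike.norm_conj, hexp1, mul_one, Complex.norm_real,
      Real.norm_eq_abs, _root_.abs_of_nonneg (hlam m)]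
    all_goals ring
  -- double sum identity
  have hDS : (∑ j, ∑ k, (starRingEnd ℂ) (a j) * a k * Klam1 lam (x j) (x k))
      = ∑' m : ℤ, (lam m : ℂ) * ((starRingEnd ℂ) (T m) * T m) := by
    have h1 : ∀ j k : Fin n, (starRingEnd ℂ) (a j) * a k * Klam1 lam (x j) (x k)
        = ∑' m : ℤ, (starRingEnd ℂ) (a j) * a k *
            ((lam m : ℂ) * Complex.exp (2 * Real.pi * Complex.I * (((m : ℝ) * (x j - x k) : ℝ) : ℂ))) := by
      intro j k
      simp only [Klam1]
      exact tsum_mul_left.symm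
    calc (∑ j, ∑ k, (starRingEnd ℂ) (a j) * a k * Klam1 lam (x j) (x k))
        = ∑ j, ∑ k, ∑' m : ℤ, (starRingEnd ℂ) (a j) * a k *
            ((lam m : ℂ) * Complex.exp (2 * Real.pi * Complex.I * (((m : ℝ) * (x j - x k) : ℝ) : ℂ))) := by
          exact Finset.sum_congr rfl fun j _ => Finset.sum_congr rfl fun k _ => h1 j k
    _ = ∑ j, ∑' m : ℤ, ∑ k, (starRingEnd ℂ) (a j) * a k *
            ((lam m : ℂ) * Complex.exp (2 * Real.pi * Complex.I * (((m : ℝ) * (x j - x k) : ℝ) : ℂ))) := by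
          exact Finset.sum_congr rfl fun j _ => (Summable.tsum_finsetSum fun k _ => hsummand j k).symm
    _ = ∑' m : ℤ, ∑ j, ∑ k, (starRingEnd ℂ) (a j) * a k *
            ((lam m : ℂ) * Complex.exp (2 * Real.pi * Complex.I * (((m : ℝ) * (x j - x k) : ℝ) : ℂ))) := by
          exact (Summable.tsum_finsetSum fun j _ => summable_sum fun k _ => hsummand j k).symm
    _ = ∑' m : ℤ, (lam m : ℂ) * ((starRingEnd ℂ) (T m) * T m) :=
          tsum_congr fun m => (hpm m).symm
  -- real part
  have hTT : ∀ m : ℤ, (starRingEnd ℂ) (T m) * T m = ((‖T m‖ ^ 2 : ℝ) : ℂ) := by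
    intro m
    rw [mul_comm, Complex.mul_conj]
    exact congrArg _ (by rw [Complex.normSq_eq_norm_sq])
  have hsumC : Summable (fun m : ℤ => (lam m : ℂ) * ((starRingEnd ℂ) (T m) * T m)) := by
    refine Summable.of_norm_bounded (g := fun m => lam m * B ^ 2)
      (hs.mul_right (B ^ 2)) (fun m => ?_)
    rw [hTT m, norm_mul, Complex.norm_real, Complex.norm_real, Real.norm_eq_abs,
      Real.norm_eq_abs, _root_.abs_of_nonneg (hlam m), _root_.abs_of_nonneg (by positivity)]
    refine mul_le_mul_of_nonneg_left ?_ (hlam m)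
    exact pow_le_pow_left₀ (norm_nonneg _) (hTle m) 2
  have hDSre : (∑ j, ∑ k, (starRingEnd ℂ) (a j) * a k * Klam1 lam (x j) (x k)).re
      = ∑' m : ℤ, lam m * ‖T m‖ ^ 2 := by
    rw [hDS, Complex.re_tsum hsumC]
    refine tsum_congr fun m => ?_
    rw [hTT m, ← Complex.ofReal_mul, Complex.ofReal_re]
  -- weight function
  set W : ℤ → ℝ := fun m => lam m * ‖T m‖ ^ 2 with hWdef
  have hW0 : ∀ m, 0 ≤ W m := fun m => mul_nonneg (hlam m) (by positivity)
  have hWs : Summable W := by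
    refine Summable.of_nonneg_of_le hW0 (fun m => ?_) (hs.mul_right (B ^ 2))
    exact mul_le_mul_of_nonneg_left (pow_le_pow_left₀ (norm_nonneg _) (hTle m) 2) (hlam m)
  have hWn : Summable (fun m : ℕ => W (m : ℤ)) := hWs.comp_injective Nat.cast_injective
  have hrestrict : ∑' m : ℕ, W (m : ℤ) ≤ ∑' m : ℤ, W m :=
    Summable.tsum_le_tsum_of_inj (fun m : ℕ => (m : ℤ)) Nat.cast_injective (fun c _ => hW0 c)
      (fun m => le_refl _) hWn hWs
  have hsplitn : ∑' m : ℕ, W (m : ℤ) = W 0 + ∑' m : ℕ, W ((m + 1 : ℕ) : ℤ) := by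
    rw [Summable.tsum_eq_zero_add hWn]
    norm_num
  -- lower bounds on lam
  have hlow0 : c ≤ lam 0 := by
    have h := hlow 0
    simpa using h
  have hlowm : ∀ m : ℕ, c * μ ^ (m + 1) ≤ lam ((m + 1 : ℕ) : ℤ) := by
    intro m
    have h := hlow ((m + 1 : ℕ) : ℤ)
    have hna : (((m + 1 : ℕ) : ℤ)).natAbs = m + 1 := Int.natAbs_natCast _
    rw [hna] at h
    have hzp : (ω : ℝ) ^ (-((m + 1 : ℕ) : ℤ)) = μ ^ (m + 1) := by
      rw [zpow_neg, zpow_natCast, ← inv_pow, hμ]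
    rwa [hzp] at h
  -- tail comparison
  have htailsum : Summable (fun m : ℕ => c * (μ ^ (m + 1) * ‖T ((m + 1 : ℕ) : ℤ)‖ ^ 2)) := by
    refine Summable.of_nonneg_of_le (fun m => by positivity) (fun m => ?_)
      (((summable_geometric_of_lt_one hμ0.le hμ1)).mul_left (c * B ^ 2 * μ))
    have h1 : ‖T ((m + 1 : ℕ) : ℤ)‖ ^ 2 ≤ B ^ 2 :=
      pow_le_pow_left₀ (norm_nonneg _) (hTle _) 2
    calc c * (μ ^ (m + 1) * ‖T ((m + 1 : ℕ) : ℤ)‖ ^ 2) ≤ c * (μ ^ (m + 1) * B ^ 2) := by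
          refine mul_le_mul_of_nonneg_left ?_ hc.le
          exact mul_le_mul_of_nonneg_left h1 (by positivity)
    _ = c * B ^ 2 * μ * μ ^ m := by rw [pow_succ]; ring
  have htail : ∑' m : ℕ, c * (μ ^ (m + 1) * ‖T ((m + 1 : ℕ) : ℤ)‖ ^ 2)
      ≤ ∑' m : ℕ, W ((m + 1 : ℕ) : ℤ) := by
    refine Summable.tsum_le_tsum (fun m => ?_) htailsum ((summable_nat_add_iff 1).mpr hWn)
    rw [hWdef]
    calc c * (μ ^ (m + 1) * ‖T ((m + 1 : ℕ) : ℤ)‖ ^ 2)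
        = (c * μ ^ (m + 1)) * ‖T ((m + 1 : ℕ) : ℤ)‖ ^ 2 := by ring
    _ ≤ lam ((m + 1 : ℕ) : ℤ) * ‖T ((m + 1 : ℕ) : ℤ)‖ ^ 2 :=
          mul_le_mul_of_nonneg_right (hlowm m) (by positivity)
  -- the norm-square algebra
  have hnormsq : ∀ z : ℂ, ‖(1:ℂ) - z‖ ^ 2 = 1 - 2 * z.re + ‖z‖ ^ 2 := by
    intro z
    have hn : ∀ y : ℂ, ‖y‖ ^ 2 = Complex.normSq y := fun y => by
      rw [Complex.sq_norm]
    rw [hn, hn, Complex.normSq_apply, Complex.normSq_apply, Complex.sub_re, Complex.sub_im,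
      Complex.one_re, Complex.one_im]
    ring
  -- star bound specialization
  set r : ℝ := Real.sqrt μ with hrdef
  have hrsq : r ^ 2 = μ := Real.sq_sqrt hμ0.le
  have hr0 : 0 < r := Real.sqrt_pos.mpr hμ0
  have hr1 : r < 1 := by nlinarith [hrsq, hr0]
  set w : Fin n → ℂ := fun j => ((r : ℝ) : ℂ) * η j with hwdef
  have hwnorm : ∀ j, ‖w j‖ = r := by
    intro j
    rw [hwdef]
    show ‖((r : ℝ) : ℂ) * η j‖ = r
    rw [norm_mul, Complex.norm_real, Real.norm_eq_abs, _root_.abs_of_nonneg hr0.le, hηnorm,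
      mul_one]
  have hstar := star_bound w a r hr0 hr1 (fun j => le_of_eq (hwnorm j))
  have hprodw : (∏ j, ‖w j‖ ^ 2) = μ ^ n := by
    calc (∏ j, ‖w j‖ ^ 2) = ∏ _j : Fin n, μ :=
          Finset.prod_congr rfl fun j _ => by rw [hwnorm j, hrsq]
    _ = μ ^ n := by rw [Finset.prod_const, Finset.card_univ, Fintype.card_fin]
  have hT0 : T 0 = ∑ j, a j := by
    rw [hTdef]
    exact Finset.sum_congr rfl fun j _ => by rw [zpow_zero, mul_one]
  -- identify the star series
  set SS : ℕ → ℝ := fun m => ‖(if m = 0 then (1:ℂ) else 0) - ∑ j, a j * w j ^ m‖ ^ 2 with hSSdef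
  have hSS0 : SS 0 = ‖(1:ℂ) - T 0‖ ^ 2 := by
    simp [hSSdef, hT0]
  have hSSm : ∀ m : ℕ, SS (m + 1) = μ ^ (m + 1) * ‖T ((m + 1 : ℕ) : ℤ)‖ ^ 2 := by
    intro m
    rw [hSSdef]
    simp only [Nat.succ_ne_zero, if_false, zero_sub, norm_neg]
    have h1 : ∑ j, a j * w j ^ (m + 1) = ((r : ℝ) : ℂ) ^ (m + 1) * T ((m + 1 : ℕ) : ℤ) := by
      rw [hTdef, Finset.mul_sum]
      refine Finset.sum_congr rfl fun j _ => ?_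
      rw [hwdef]
      show a j * (((r : ℝ) : ℂ) * η j) ^ (m + 1) = _
      rw [mul_pow, zpow_natCast]
      ring
    rw [h1, norm_mul, norm_pow, Complex.norm_real, Real.norm_eq_abs,
      _root_.abs_of_nonneg hr0.le, mul_pow]
    have h2 : (r ^ (m + 1)) ^ 2 = μ ^ (m + 1) := by
      rw [← pow_mul, mul_comm (m + 1) 2, pow_mul, hrsq]
    rw [h2]
  have hSSsum : Summable SS := by
    refine Summable.of_nonneg_of_le (fun m => by positivity) (fun m => ?_)
      (((summable_geometric_of_lt_one hμ0.le hμ1)).mul_left ((‖(1:ℂ) - T 0‖^2 + B ^ 2)))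
    rcases m with _ | m
    · rw [hSS0, pow_zero, mul_one]
      nlinarith [sq_nonneg B]
    · rw [hSSm m]
      have h1 : ‖T ((m + 1 : ℕ) : ℤ)‖ ^ 2 ≤ B ^ 2 :=
        pow_le_pow_left₀ (norm_nonneg _) (hTle _) 2
      have h3 : (0:ℝ) ≤ μ ^ (m + 1) := by positivity
      have h5 : (0:ℝ) ≤ ‖(1:ℂ) - T 0‖^2 := by positivity
      calc μ ^ (m + 1) * ‖T ((m + 1 : ℕ) : ℤ)‖ ^ 2 ≤ μ ^ (m + 1) * B ^ 2 :=
            mul_le_mul_of_nonneg_left h1 h3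
      _ ≤ (‖(1:ℂ) - T 0‖^2 + B ^ 2) * μ ^ (m + 1) := by nlinarith
  have hSSid : ∑' m : ℕ, SS m
      = ‖(1:ℂ) - T 0‖ ^ 2 + ∑' m : ℕ, μ ^ (m + 1) * ‖T ((m + 1 : ℕ) : ℤ)‖ ^ 2 := by
    rw [Summable.tsum_eq_zero_add hSSsum, hSS0]
    congr 1
    exact tsum_congr hSSm
  -- final chain
  have hq : quadErr2₁ lam x a
      = lam 0 - 2 * lam 0 * (T 0).re + ∑' m : ℤ, W m := by
    rw [quadErr2₁, hDSre, hT0]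
  have hW00 : W 0 = lam 0 * ‖T 0‖ ^ 2 := by
    rw [hWdef]
  have hstar' : μ ^ n ≤ ∑' m : ℕ, SS m := by
    rw [← hprodw]
    exact hstar
  have htail2 : c * ∑' m : ℕ, μ ^ (m + 1) * ‖T ((m + 1 : ℕ) : ℤ)‖ ^ 2
      ≤ ∑' m : ℕ, W ((m + 1 : ℕ) : ℤ) := by
    rw [← tsum_mul_left]
    exact htail
  have hcone : c * ‖(1:ℂ) - T 0‖ ^ 2 ≤ lam 0 * ‖(1:ℂ) - T 0‖ ^ 2 :=
    mul_le_mul_of_nonneg_right hlow0 (by positivity)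
  have hone : lam 0 * ‖(1:ℂ) - T 0‖ ^ 2
      = lam 0 - 2 * lam 0 * (T 0).re + lam 0 * ‖T 0‖ ^ 2 := by
    rw [hnormsq (T 0)]; ring
  calc c * μ ^ n ≤ c * ∑' m : ℕ, SS m := mul_le_mul_of_nonneg_left hstar' hc.le
  _ = c * ‖(1:ℂ) - T 0‖ ^ 2 + c * ∑' m : ℕ, μ ^ (m + 1) * ‖T ((m + 1 : ℕ) : ℤ)‖ ^ 2 := by
        rw [hSSid]; ring
  _ ≤ lam 0 * ‖(1:ℂ) - T 0‖ ^ 2 + ∑' m : ℕ, W ((m + 1 : ℕ) : ℤ) := add_le_add hcone htail2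
  _ = lam 0 - 2 * lam 0 * (T 0).re + (W 0 + ∑' m : ℕ, W ((m + 1 : ℕ) : ℤ)) := by
        rw [hone, hW00]; ring
  _ = lam 0 - 2 * lam 0 * (T 0).re + ∑' m : ℕ, W ((m : ℕ) : ℤ) := by rw [← hsplitn]
  _ ≤ lam 0 - 2 * lam 0 * (T 0).re + ∑' m : ℤ, W m := by linarith [hrestrict]
  _ = quadErr2₁ lam x a := hq.symm
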